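/- Suppose the word α = v_1^{n1+1} · v_2 · v_3 (a prefix) has period |v_1|, the word β = v_1 · v_2 · v_3^{n2+1} (a suffix of the same word w = v_1^{n1+1} · v_2 · v_3^{n2+1}) has period |v_3|, where v_1, v_3 are nonempty. Since α and β share within w a common factor of length at least |v_1| + |v_3|, the whole word w = v_1^{n1+1} · v_2 · v_3^{n2+1} has period gcd(|v_1|, |v_3|). -/

import Mathlib

/-- A word `w` has period `p` if letters at distance `p` coincide. -/
def HasPeriod {α : Type*} (w : List α) (p : ℕ) : Prop :=
  ∀ i, i + p < w.length → w[i]? = w[i + p]?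

/-- `npow n v` is the `n`-fold repetition `v^n`. -/
def npow {α : Type*} (n : ℕ) (v : List α) : List α :=
  (List.replicate n v).flatten

namespace FWaux

variable {α : Type*}

/-- `getElem?`-version of `HasPeriod`. -/
def HasPeriod' (w : List α) (p : ℕ) : Prop :=
  ∀ i, i + p < w.length → w[i]? = w[i + p]?

lemma hasPeriod_iff {w : List α} {p : ℕ} : HasPeriod w p ↔ HasPeriod' w p := by
  unfold HasPeriod HasPeriod'
  exact Iff.rfl

lemma npow_length (n : ℕ) (v : List α) : (npow n v).length = n * v.length := by
  induction n with
  | zero => simp [npow]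
  | succ n ih =>
    simp only [npow, List.replicate_succ, List.flatten_cons, List.length_append]
    simp only [npow] at ih
    rw [ih]; ring

lemma npow_succ (n : ℕ) (v : List α) : npow (n + 1) v = v ++ npow n v := by
  simp [npow, List.replicate_succ]

lemma npow_succ' (n : ℕ) (v : List α) : npow (n + 1) v = npow n v ++ v := by
  simp [npow, List.replicate_succ', List.flatten_append]

lemma hasPeriod'_drop {w : List α} {p : ℕ} (h : HasPeriod' w p) (a : ℕ) :
    HasPeriod' (w.drop a) p := by
  intro i hi
  rw [List.length_drop] at hi
  rw [List.getElem?_drop, List.getElem?_drop]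
  have := h (a + i) (by omega)
  rw [this]
  congr 1
  omega

lemma hasPeriod'_take {w : List α} {p : ℕ} (h : HasPeriod' w p) (b : ℕ) :
    HasPeriod' (w.take b) p := by
  intro i hi
  rw [List.length_take] at hi
  rw [List.getElem?_take, List.getElem?_take, if_pos (by omega), if_pos (by omega)]
  exact h i (by omega)

lemma period_sub {w : List α} {p q : ℕ} (hqp : q ≤ p) (hw : p + q ≤ w.length)
    (hp : HasPeriod' w p) (hq : HasPeriod' w q) : HasPeriod' w (p - q) := by
  intro i hi
  rcases lt_or_ge (i + p) w.length with h | h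
  · have e1 : w[i]? = w[i + p]? := hp i h
    have e2 : w[i + (p - q)]? = w[i + (p - q) + q]? := hq _ (by omega)
    rw [show i + (p - q) + q = i + p by omega] at e2
    rw [e1, ← e2]
  · have hiq : q ≤ i := by omega
    have e1 : w[i - q]? = w[i - q + q]? := hq _ (by omega)
    have e2 : w[i - q]? = w[i - q + p]? := hp _ (by omega)
    rw [show i - q + q = i by omega] at e1
    rw [show i - q + p = i + (p - q) by omega] at e2
    rw [← e1, e2]

lemma fineWilfAux : ∀ (N p q : ℕ), p + q ≤ N → 0 < p → 0 < q → ∀ w : List α,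
    p + q ≤ w.length → HasPeriod' w p → HasPeriod' w q →
    HasPeriod' w (Nat.gcd p q) := by
  intro N
  induction N with
  | zero => intro p q h hp0; omega
  | succ N ih =>
    intro p q hN hp0 hq0 w hw hp hq
    rcases lt_trichotomy p q with h | h | h
    · have hsub : HasPeriod' w (q - p) := period_sub (le_of_lt h) (by omega) hq hp
      have := ih (q - p) p (by omega) (by omega) hp0 w (by omega) hsub hp
      rwa [Nat.gcd_sub_self_left (le_of_lt h), Nat.gcd_comm] at this
    · subst h
      rw [Nat.gcd_self]
      exact hp
    · have hsub : HasPeriod' w (p - q) := period_sub (le_of_lt h) (by omega) hp hq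
      have := ih (p - q) q (by omega) (by omega) hq0 w (by omega) hsub hq
      rwa [Nat.gcd_sub_self_left (le_of_lt h)] at this

lemma fineWilf {p q : ℕ} (hp0 : 0 < p) (hq0 : 0 < q) {w : List α}
    (hw : p + q ≤ w.length) (hp : HasPeriod' w p) (hq : HasPeriod' w q) :
    HasPeriod' w (Nat.gcd p q) :=
  fineWilfAux (p + q) p q le_rfl hp0 hq0 w hw hp hq

end FWaux

open FWaux in
/-- If the prefix `v_1^{n1+1} · v_2 · v_3` of `w = v_1^{n1+1} · v_2 · v_3^{n2+1}`
has period `|v_1|` and the suffix `v_1 · v_2 · v_3^{n2+1}` has period `|v_3|`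
(with `v_1, v_3` nonempty), then `w` has period `gcd(|v_1|, |v_3|)`. -/
theorem overlapping_prefix_suffix_period {α : Type*} (v1 v2 v3 : List α)
    (n1 n2 : ℕ) (h1 : v1 ≠ []) (h3 : v3 ≠ [])
    (hpre : HasPeriod (npow (n1 + 1) v1 ++ v2 ++ v3) v1.length)
    (hsuf : HasPeriod (v1 ++ v2 ++ npow (n2 + 1) v3) v3.length) :
    HasPeriod (npow (n1 + 1) v1 ++ v2 ++ npow (n2 + 1) v3)
      (Nat.gcd v1.length v3.length) := by
  rw [hasPeriod_iff] at hpre hsuf ⊢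
  set p := v1.length with hpdef
  set q := v3.length with hqdef
  set m := v2.length with hmdef
  set g := Nat.gcd p q with hgdef
  have hp0 : 0 < p := List.length_pos_iff.mpr h1
  have hq0 : 0 < q := List.length_pos_iff.mpr h3
  have hgp : g ≤ p := Nat.le_of_dvd hp0 (Nat.gcd_dvd_left p q)
  have hgq : g ≤ q := Nat.le_of_dvd hq0 (Nat.gcd_dvd_right p q)
  set A := npow (n1 + 1) v1 ++ v2 ++ v3 with hAdef
  set B := v1 ++ v2 ++ npow (n2 + 1) v3 with hBdef
  set G := v1 ++ v2 ++ v3 with hGdef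
  set w := npow (n1 + 1) v1 ++ v2 ++ npow (n2 + 1) v3 with hwdef
  have hlen1 : (npow n1 v1).length = n1 * p := npow_length n1 v1
  have hd1 : (n1 + 1) * p = n1 * p + p := by ring
  have hd2 : (n2 + 1) * q = n2 * q + q := by ring
  have hlA : A.length = (n1 + 1) * p + m + q := by
    simp [hAdef, npow_length]; ring
  have hlB : B.length = p + m + (n2 + 1) * q := by
    simp [hBdef, npow_length]; ring
  have hlG : G.length = p + m + q := by simp [hGdef]; ring
  have hlw : w.length = (n1 + 1) * p + m + (n2 + 1) * q := by
    simp [hwdef, npow_length]; ring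
  have hAeq : A = npow n1 v1 ++ G := by
    rw [hAdef, hGdef, npow_succ']
    simp [List.append_assoc]
  have hBeq : B = G ++ npow n2 v3 := by
    rw [hBdef, hGdef, npow_succ]
    simp [List.append_assoc]
  have hwA : w = A ++ npow n2 v3 := by
    rw [hwdef, hAdef]
    simp [npow_succ, List.append_assoc]
  have hwB : w = npow n1 v1 ++ B := by
    rw [hwdef, hBdef]
    simp [npow_succ', List.append_assoc]
  -- relating entries
  have hAG : ∀ j, A[n1 * p + j]? = G[j]? := by
    intro j
    rw [hAeq, List.getElem?_append_right (by rw [hlen1]; omega)]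
    congr 1
    rw [hlen1]; omega
  have hBG : ∀ j, j < p + m + q → B[j]? = G[j]? := by
    intro j hj
    rw [hBeq, List.getElem?_append, if_pos (by omega)]
  have hwA' : ∀ j, j < (n1 + 1) * p + m + q → w[j]? = A[j]? := by
    intro j hj
    rw [hwA, List.getElem?_append, if_pos (by omega)]
  have hwB' : ∀ j, w[n1 * p + j]? = B[j]? := by
    intro j
    rw [hwB, List.getElem?_append_right (by rw [hlen1]; omega)]
    congr 1
    rw [hlen1]; omega
  -- G has periods p and q, hence g
  have hGp : HasPeriod' G p := by
    have := hasPeriod'_drop hpre (n1 * p)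
    have hdrop : A.drop (n1 * p) = G := by
      rw [hAeq, ← hlen1, List.drop_left]
    rwa [hdrop] at this
  have hGq : HasPeriod' G q := by
    have := hasPeriod'_take hsuf (p + m + q)
    have htake : B.take (p + m + q) = G := by
      rw [hBeq, ← hlG, List.take_left]
    rwa [htake] at this
  have hGg : HasPeriod' G g := fineWilf hp0 hq0 (by omega) hGp hGq
  -- A has period g
  have keyA : ∀ M i, n1 * p - i ≤ M → i + g < A.length → A[i]? = A[i + g]? := by
    intro M
    induction M with
    | zero =>
      intro i hM hi
      have hni : n1 * p ≤ i := by omega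
      rw [show i = n1 * p + (i - n1 * p) by omega, hAG,
        show n1 * p + (i - n1 * p) + g = n1 * p + (i - n1 * p + g) by omega, hAG]
      exact hGg (i - n1 * p) (by omega)
    | succ M ih =>
      intro i hM hi
      rcases le_or_gt (n1 * p) i with hni | hni
      · rw [show i = n1 * p + (i - n1 * p) by omega, hAG,
          show n1 * p + (i - n1 * p) + g = n1 * p + (i - n1 * p + g) by omega, hAG]
        exact hGg (i - n1 * p) (by omega)
      · have e1 : A[i]? = A[i + p]? := hpre i (by omega)
        have e2 : A[i + g]? = A[i + g + p]? := hpre (i + g) (by omega)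
        rw [e1, ih (i + p) (by omega) (by omega),
          show i + p + g = i + g + p by omega, ← e2]
  have hAg : HasPeriod' A g := fun i hi => keyA (n1 * p) i (by omega) hi
  -- B has period g
  have keyB : ∀ M i, i ≤ M → i + g < B.length → B[i]? = B[i + g]? := by
    intro M
    induction M with
    | zero =>
      intro i hM hi
      have hi0 : i = 0 := by omega
      subst hi0
      rw [Nat.zero_add, hBG 0 (by omega), hBG g (by omega)]
      simpa using hGg 0 (by omega)
    | succ M ih =>
      intro i hM hi
      rcases lt_or_ge (i + g) (p + m + q) with hov | hov
      · rw [hBG i (by omega), hBG (i + g) (by omega)]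
        exact hGg i (by omega)
      · have hiq : q ≤ i := by omega
        have e1 : B[i - q]? = B[i - q + q]? := hsuf _ (by omega)
        have e2 : B[i + g - q]? = B[i + g - q + q]? := hsuf _ (by omega)
        rw [show i - q + q = i by omega] at e1
        rw [show i + g - q + q = i + g by omega] at e2
        rw [← e1, ih (i - q) (by omega) (by omega),
          show i - q + g = i + g - q by omega, e2]
  have hBg : HasPeriod' B g := fun i hi => keyB i i le_rfl hi
  -- conclude for w
  intro i hi
  rw [hlw] at hi
  rcases lt_or_ge (i + g) ((n1 + 1) * p + m + q) with hc | hc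
  · rw [hwA' i (by omega), hwA' (i + g) (by omega)]
    exact hAg i (by omega)
  · have hni : n1 * p ≤ i := by omega
    rw [show i = n1 * p + (i - n1 * p) by omega, hwB',
      show n1 * p + (i - n1 * p) + g = n1 * p + (i - n1 * p + g) by omega, hwB']
    exact hBg (i - n1 * p) (by omega)
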